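/- Let G : [0,T] × Σ_d → ℝ^d be the vector field Gᵢ(t,x) = Σⱼ xⱼ qⱼᵢ(t,x) with q as above (off-diagonal entries in [0,Q], rows summing to zero, Lipschitz in x). Then the initial value problem dX(t)/dt = G(t, X(t)), X(0) = x₀ ∈ Σ_d, has a unique solution on [0,T], and this solution remains in the simplex Σ_d for all t ∈ [0,T]. -/

import Mathlib

open Set

/-- clamp to `[0,1]` -/
noncomputable def igR (s : ℝ) : ℝ := min (max s 0) 1

lemma igR_nonneg (s : ℝ) : 0 ≤ igR s := le_min (le_max_right _ _) zero_le_one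

lemma igR_le_one (s : ℝ) : igR s ≤ 1 := min_le_right _ _

lemma igR_eq_self {s : ℝ} (h0 : 0 ≤ s) (h1 : s ≤ 1) : igR s = s := by
  simp [igR, max_eq_left h0, min_eq_left h1]

lemma igR_eq_zero {s : ℝ} (h : s ≤ 0) : igR s = 0 := by
  simp [igR, max_eq_right h]

lemma igR_abs_le_one (s : ℝ) : |igR s| ≤ 1 :=
  abs_le.mpr ⟨by linarith [igR_nonneg s], igR_le_one s⟩

lemma igR_lip (a b : ℝ) : |igR a - igR b| ≤ |a - b| := by
  have h1 : |max a 0 - max b 0| ≤ |a - b| := abs_max_sub_max_le_abs a b 0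
  have h2 : |igR a - igR b| ≤ max |max a 0 - max b 0| |(1:ℝ) - 1| :=
    abs_min_sub_min_le_max (max a 0) 1 (max b 0) 1
  simp only [sub_self, abs_zero] at h2
  exact h2.trans (max_le h1 (abs_nonneg _))

/-- barrier lemma: if the derivative is nonnegative whenever `f ≤ 0`, and `f 0 ≥ 0`,
then `f ≥ 0` on `[0,T]`. -/
lemma ig_nonneg (T : ℝ) (f g : ℝ → ℝ)
    (hf : ∀ t ∈ Set.Icc (0:ℝ) T, HasDerivWithinAt f (g t) (Set.Icc 0 T) t)
    (h0 : 0 ≤ f 0)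
    (hpos : ∀ t ∈ Set.Icc (0:ℝ) T, f t ≤ 0 → 0 ≤ g t) :
    ∀ t ∈ Set.Icc (0:ℝ) T, 0 ≤ f t := by
  have hcont : ContinuousOn f (Set.Icc 0 T) := fun t ht => (hf t ht).continuousWithinAt
  by_contra h
  push_neg at h
  obtain ⟨t₁, ht₁, hft₁⟩ := h
  set A := {t ∈ Set.Icc (0:ℝ) t₁ | 0 ≤ f t} with hA
  have hsub : Set.Icc (0:ℝ) t₁ ⊆ Set.Icc 0 T := Set.Icc_subset_Icc le_rfl ht₁.2
  have hAne : A.Nonempty := ⟨0, ⟨le_rfl, ht₁.1⟩, h0⟩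
  have hAclosed : IsClosed A := by
    have hAeq : A = Set.Icc 0 t₁ ∩ f ⁻¹' Set.Ici 0 := by
      ext u; simp [hA, Set.mem_sep_iff, and_comm]
    rw [hAeq]
    exact (hcont.mono hsub).preimage_isClosed_of_isClosed isClosed_Icc isClosed_Ici
  have hAcomp : IsCompact A := isCompact_Icc.of_isClosed_subset hAclosed (Set.sep_subset _ _)
  set t₀ := sSup A with ht₀def
  have ht₀A : t₀ ∈ A := hAcomp.sSup_mem hAne
  obtain ⟨ht₀Icc, hft₀⟩ := ht₀A
  have ht₀lt : t₀ < t₁ := by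
    rcases lt_or_eq_of_le ht₀Icc.2 with h | h
    · exact h
    · exact absurd (h ▸ hft₀) (not_le.mpr hft₁)
  have hneg : ∀ t ∈ Set.Ioc t₀ t₁, f t < 0 := by
    intro t ht
    by_contra hge
    push_neg at hge
    have : t ∈ A := ⟨⟨ht₀Icc.1.trans ht.1.le, ht.2⟩, hge⟩
    exact absurd (le_csSup hAcomp.bddAbove this) (not_le.mpr ht.1)
  have hmono : MonotoneOn f (Set.Icc t₀ t₁) := by
    apply monotoneOn_of_hasDerivWithinAt_nonneg (convex_Icc _ _)
      (hcont.mono (Set.Icc_subset_Icc ht₀Icc.1 ht₁.2)) (f' := g)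
    · intro x hx
      rw [interior_Icc] at hx
      have hxIcc : x ∈ Set.Icc (0:ℝ) T := ⟨ht₀Icc.1.trans hx.1.le, hx.2.le.trans ht₁.2⟩
      have hDA : HasDerivAt f (g x) x := by
        apply (hf x hxIcc).hasDerivAt
        exact Icc_mem_nhds (lt_of_le_of_lt ht₀Icc.1 hx.1) (lt_of_lt_of_le hx.2 ht₁.2)
      exact hDA.hasDerivWithinAt
    · intro x hx
      rw [interior_Icc] at hx
      exact hpos x ⟨ht₀Icc.1.trans hx.1.le, hx.2.le.trans ht₁.2⟩ (hneg x ⟨hx.1, hx.2.le⟩).le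
  have := hmono (Set.left_mem_Icc.mpr ht₀lt.le) (Set.right_mem_Icc.mpr ht₀lt.le) ht₀lt.le
  linarith

lemma ig_const (T : ℝ) (f : ℝ → ℝ)
    (hf : ∀ t ∈ Set.Icc (0:ℝ) T, HasDerivWithinAt f 0 (Set.Icc 0 T) t) :
    ∀ t ∈ Set.Icc (0:ℝ) T, f t = f 0 := by
  intro t ht
  apply constant_of_has_deriv_right_zero (fun s hs => (hf s hs).continuousWithinAt) _ t ht
  intro x hx
  exact (hf x (Set.Ico_subset_Icc_self hx)).mono_of_mem_nhdsWithin (Icc_mem_nhdsGE_of_mem hx)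

/-- the truncated vector field -/
noncomputable def igV (d : ℕ) (q : ℝ → (Fin d → ℝ) → Fin d → Fin d → ℝ)
    (t : ℝ) (x : Fin d → ℝ) (i : Fin d) : ℝ :=
  ∑ j, igR (x j) * q t (fun k => igR (x k)) j i

/-- the original vector field -/
noncomputable def igW (d : ℕ) (q : ℝ → (Fin d → ℝ) → Fin d → Fin d → ℝ)
    (t : ℝ) (x : Fin d → ℝ) (i : Fin d) : ℝ :=
  ∑ j, x j * q t x j i

theorem stmt9 (d : ℕ) (hd : 0 < d) (T Q : ℝ) (hT : 0 < T) (hQ : 0 < Q) (c : NNReal)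
    (q : ℝ → (Fin d → ℝ) → Fin d → Fin d → ℝ)
    (hbox : ∀ (t : ℝ) (x : Fin d → ℝ) (i j : Fin d), i ≠ j → q t x i j ∈ Set.Icc 0 Q)
    (hrow : ∀ (t : ℝ) (x : Fin d → ℝ) (i : Fin d), ∑ j, q t x i j = 0)
    (hLip : ∀ (t : ℝ) (i j : Fin d), LipschitzWith c (fun x => q t x i j))
    (hcont : ∀ i j : Fin d, Continuous (fun p : ℝ × (Fin d → ℝ) => q p.1 p.2 i j))
    (x₀ : Fin d → ℝ) (hx₀ : x₀ ∈ stdSimplex ℝ (Fin d)) :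
    ∃ X : ℝ → Fin d → ℝ,
      X 0 = x₀ ∧
      (∀ t ∈ Set.Icc 0 T,
        HasDerivWithinAt X (fun i => ∑ j, X t j * q t (X t) j i) (Set.Icc 0 T) t) ∧
      (∀ t ∈ Set.Icc 0 T, X t ∈ stdSimplex ℝ (Fin d)) ∧
      ∀ Y : ℝ → Fin d → ℝ, Y 0 = x₀ →
        (∀ t ∈ Set.Icc 0 T,
          HasDerivWithinAt Y (fun i => ∑ j, Y t j * q t (Y t) j i) (Set.Icc 0 T) t) →
        ∀ t ∈ Set.Icc 0 T, Y t = X t := by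
  classical
  obtain ⟨hx₀nn, hx₀sum⟩ := hx₀
  have hd1 : (1:ℝ) ≤ d := by exact_mod_cast hd
  have hdQ : (0:ℝ) ≤ d * Q := by positivity
  -- bound on q (any entry)
  have qb : ∀ (t : ℝ) (x : Fin d → ℝ) (j i : Fin d), |q t x j i| ≤ d * Q := by
    intro t x j i
    rcases eq_or_ne j i with rfl | hne
    · have hsum := hrow t x j
      have hsplit : q t x j j + ∑ k ∈ Finset.univ.erase j, q t x j k = 0 := by
        rw [Finset.add_sum_erase _ _ (Finset.mem_univ j)]; exact hsum
      have hnn : (0:ℝ) ≤ ∑ k ∈ Finset.univ.erase j, q t x j k :=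
        Finset.sum_nonneg fun k hk =>
          (hbox t x j k (Ne.symm (Finset.ne_of_mem_erase hk))).1
      have hle : ∑ k ∈ Finset.univ.erase j, q t x j k ≤ (Finset.univ.erase j).card • Q :=
        Finset.sum_le_card_nsmul _ _ Q fun k hk =>
          (hbox t x j k (Ne.symm (Finset.ne_of_mem_erase hk))).2
      have hcard : ((Finset.univ.erase j).card : ℝ) ≤ d := by
        have := Finset.card_erase_le (a := j) (s := (Finset.univ : Finset (Fin d)))
        have h2 : (Finset.univ : Finset (Fin d)).card = d := Finset.card_univ.trans (Fintype.card_fin d)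
        calc ((Finset.univ.erase j).card : ℝ) ≤ ((Finset.univ : Finset (Fin d)).card : ℝ) := by
              exact_mod_cast this
          _ = d := by rw [h2]
      have hle' : ∑ k ∈ Finset.univ.erase j, q t x j k ≤ d * Q := by
        rw [nsmul_eq_mul] at hle
        exact hle.trans (mul_le_mul_of_nonneg_right hcard hQ.le)
      have : q t x j j = -∑ k ∈ Finset.univ.erase j, q t x j k := by linarith
      rw [this, abs_neg, abs_of_nonneg hnn]
      exact hle'
    · have h := hbox t x j i hne
      rw [abs_of_nonneg h.1]
      calc q t x j i ≤ Q := h.2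
        _ = 1 * Q := (one_mul Q).symm
        _ ≤ d * Q := mul_le_mul_of_nonneg_right hd1 hQ.le
  -- bound on igV
  have hC : (0:ℝ) ≤ d * (d * Q) := by positivity
  have vb : ∀ (t : ℝ) (x : Fin d → ℝ), ‖igV d q t x‖ ≤ d * (d * Q) := by
    intro t x
    rw [pi_norm_le_iff_of_nonneg hC]
    intro i
    rw [Real.norm_eq_abs]
    calc |igV d q t x i| ≤ ∑ j, |igR (x j) * q t (fun k => igR (x k)) j i| :=
          Finset.abs_sum_le_sum_abs _ _
      _ ≤ ∑ _j : Fin d, d * Q := by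
          apply Finset.sum_le_sum
          intro j _
          rw [abs_mul]
          calc |igR (x j)| * |q t (fun k => igR (x k)) j i| ≤ 1 * (d * Q) :=
                mul_le_mul (igR_abs_le_one _) (qb _ _ _ _) (abs_nonneg _) zero_le_one
            _ = d * Q := one_mul _
      _ = d * (d * Q) := by
          rw [Finset.sum_const, Finset.card_univ, Fintype.card_fin, nsmul_eq_mul]
  -- Lipschitz bound on igV
  have hKnn : (0:ℝ) ≤ d * (d * Q + c) := by positivity
  have vlip : ∀ t : ℝ, LipschitzWith (Real.toNNReal (d * (d * Q + c))) (igV d q t) := by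
    intro t
    apply LipschitzWith.of_dist_le_mul
    intro x y
    rw [Real.coe_toNNReal _ hKnn]
    have hdxy : (0:ℝ) ≤ dist x y := dist_nonneg
    rw [dist_pi_le_iff (by positivity)]
    intro i
    rw [Real.dist_eq]
    have hPd : dist (fun k => igR (x k)) (fun k => igR (y k)) ≤ dist x y := by
      rw [dist_pi_le_iff hdxy]
      intro j
      rw [Real.dist_eq]
      exact (igR_lip _ _).trans (by rw [← Real.dist_eq]; exact dist_le_pi_dist x y j)
    have hq : ∀ j k : Fin d,
        |q t (fun m => igR (x m)) j k - q t (fun m => igR (y m)) j k| ≤ c * dist x y := by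
      intro j k
      have h := (hLip t j k).dist_le_mul (fun m => igR (x m)) (fun m => igR (y m))
      rw [Real.dist_eq] at h
      exact h.trans (mul_le_mul_of_nonneg_left hPd c.coe_nonneg)
    have hterm : ∀ j : Fin d,
        |igR (x j) * q t (fun m => igR (x m)) j i - igR (y j) * q t (fun m => igR (y m)) j i|
          ≤ (d * Q + c) * dist x y := by
      intro j
      have hdecomp : igR (x j) * q t (fun m => igR (x m)) j i
          - igR (y j) * q t (fun m => igR (y m)) j i
          = (igR (x j) - igR (y j)) * q t (fun m => igR (x m)) j i
            + igR (y j) * (q t (fun m => igR (x m)) j i - q t (fun m => igR (y m)) j i) := by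
        ring
      rw [hdecomp]
      calc |(igR (x j) - igR (y j)) * q t (fun m => igR (x m)) j i
            + igR (y j) * (q t (fun m => igR (x m)) j i - q t (fun m => igR (y m)) j i)|
          ≤ |(igR (x j) - igR (y j)) * q t (fun m => igR (x m)) j i|
            + |igR (y j) * (q t (fun m => igR (x m)) j i - q t (fun m => igR (y m)) j i)| :=
            abs_add_le _ _
        _ = |igR (x j) - igR (y j)| * |q t (fun m => igR (x m)) j i|
            + |igR (y j)| * |q t (fun m => igR (x m)) j i - q t (fun m => igR (y m)) j i| := by
            rw [abs_mul, abs_mul]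
        _ ≤ dist x y * (d * Q) + 1 * (c * dist x y) := by
            apply add_le_add
            · apply mul_le_mul _ (qb _ _ _ _) (abs_nonneg _) hdxy
              exact (igR_lip _ _).trans (by rw [← Real.dist_eq]; exact dist_le_pi_dist x y j)
            · exact mul_le_mul (igR_abs_le_one _) (hq j i) (abs_nonneg _) zero_le_one
        _ = (d * Q + c) * dist x y := by ring
    calc |igV d q t x i - igV d q t y i|
        = |∑ j, (igR (x j) * q t (fun m => igR (x m)) j i
            - igR (y j) * q t (fun m => igR (y m)) j i)| := by
          rw [igV, igV, ← Finset.sum_sub_distrib]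
      _ ≤ ∑ j, |igR (x j) * q t (fun m => igR (x m)) j i
            - igR (y j) * q t (fun m => igR (y m)) j i| := Finset.abs_sum_le_sum_abs _ _
      _ ≤ ∑ _j : Fin d, (d * Q + c) * dist x y := Finset.sum_le_sum fun j _ => hterm j
      _ = d * (d * Q + c) * dist x y := by
          rw [Finset.sum_const, Finset.card_univ, Fintype.card_fin, nsmul_eq_mul]; ring
  -- continuity of igV in t
  have vcont : ∀ x : Fin d → ℝ, Continuous fun t => igV d q t x := by
    intro x
    unfold igV
    apply continuous_pi
    intro i
    apply continuous_finset_sum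
    intro j _
    exact continuous_const.mul ((hcont j i).comp (continuous_id.prodMk continuous_const))
  -- Picard-Lindelöf
  have hPL : IsPicardLindelof (igV d q) (tmin := 0) (tmax := T) ⟨0, ⟨le_rfl, hT.le⟩⟩ x₀
      (Real.toNNReal (d * (d * Q) * T)) 0 (Real.toNNReal (d * (d * Q)))
      (Real.toNNReal (d * (d * Q + c))) :=
    { lipschitzOnWith := fun t _ => (vlip t).lipschitzOnWith
      continuousOn := fun x _ => (vcont x).continuousOn
      norm_le := fun t _ x _ => by rw [Real.coe_toNNReal _ hC]; exact vb t x
      mul_max_le := by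
        rw [Real.coe_toNNReal _ hC, Real.coe_toNNReal _ (by positivity)]
        simp [hT.le] }
  obtain ⟨X, hX0, hXd⟩ := hPL.exists_eq_forall_mem_Icc_hasDerivWithinAt₀
  replace hX0 : X 0 = x₀ := hX0
  -- nonnegativity of components
  have hnn : ∀ (i : Fin d), ∀ t ∈ Set.Icc (0:ℝ) T, 0 ≤ X t i := by
    intro i
    apply ig_nonneg T (fun t => X t i) (fun t => igV d q t (X t) i)
    · intro t ht
      exact (hasDerivWithinAt_pi.mp (hXd t ht)) i
    · rw [hX0]; exact hx₀nn i
    · intro t ht hle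
      apply Finset.sum_nonneg
      intro j _
      rcases eq_or_ne j i with rfl | hne
      · rw [igR_eq_zero hle, zero_mul]
      · exact mul_nonneg (igR_nonneg _) (hbox t _ j i hne).1
  -- sum is constant equal to 1
  have hsum : ∀ t ∈ Set.Icc (0:ℝ) T, ∑ i, X t i = 1 := by
    have hder : ∀ t ∈ Set.Icc (0:ℝ) T,
        HasDerivWithinAt (fun s => ∑ i, X s i) 0 (Set.Icc 0 T) t := by
      intro t ht
      have h1 : HasDerivWithinAt (fun s => ∑ i, X s i) (∑ i, igV d q t (X t) i)
          (Set.Icc 0 T) t :=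
        HasDerivWithinAt.fun_sum fun i _ => (hasDerivWithinAt_pi.mp (hXd t ht)) i
      have h2 : ∑ i, igV d q t (X t) i = 0 := by
        unfold igV
        rw [Finset.sum_comm]
        simp_rw [← Finset.mul_sum, hrow, mul_zero, Finset.sum_const_zero]
      rwa [h2] at h1
    intro t ht
    rw [ig_const T _ hder t ht, hX0, hx₀sum]
  have hle1 : ∀ (i : Fin d), ∀ t ∈ Set.Icc (0:ℝ) T, X t i ≤ 1 := by
    intro i t ht
    calc X t i ≤ ∑ j, X t j :=
          Finset.single_le_sum (fun j _ => hnn j t ht) (Finset.mem_univ i)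
      _ = 1 := hsum t ht
  have hmem : ∀ t ∈ Set.Icc (0:ℝ) T, X t ∈ stdSimplex ℝ (Fin d) :=
    fun t ht => ⟨fun i => hnn i t ht, hsum t ht⟩
  -- on the simplex, igV agrees with the original field
  have hVeq : ∀ t ∈ Set.Icc (0:ℝ) T,
      igV d q t (X t) = fun i => ∑ j, X t j * q t (X t) j i := by
    intro t ht
    funext i
    unfold igV
    have hfix : (fun k => igR (X t k)) = X t :=
      funext fun k => igR_eq_self (hnn k t ht) (hle1 k t ht)
    rw [hfix]
    exact Finset.sum_congr rfl fun j _ => by rw [igR_eq_self (hnn j t ht) (hle1 j t ht)]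
  have hXde : ∀ t ∈ Set.Icc (0:ℝ) T,
      HasDerivWithinAt X (fun i => ∑ j, X t j * q t (X t) j i) (Set.Icc 0 T) t := by
    intro t ht
    have := hXd t ht
    rwa [hVeq t ht] at this
  refine ⟨X, hX0, hXde, hmem, ?_⟩
  -- uniqueness
  intro Y hY0 hYd
  have hYcont : ContinuousOn Y (Set.Icc 0 T) := fun t ht => (hYd t ht).continuousWithinAt
  have hXcont : ContinuousOn X (Set.Icc 0 T) := fun t ht => (hXde t ht).continuousWithinAt
  obtain ⟨M, hM⟩ := isCompact_Icc.exists_bound_of_continuousOn hYcont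
  set R' := max M 1 with hR'def
  have hR'1 : (1:ℝ) ≤ R' := le_max_right _ _
  have hR'0 : (0:ℝ) ≤ R' := zero_le_one.trans hR'1
  have hwlip : ∀ t : ℝ, LipschitzOnWith (Real.toNNReal (d * (d * Q + R' * c))) (igW d q t)
      (Metric.closedBall (0 : Fin d → ℝ) R') := by
    intro t
    rw [lipschitzOnWith_iff_dist_le_mul]
    intro x hx y hy
    rw [Real.coe_toNNReal _ (by positivity)]
    have hdxy : (0:ℝ) ≤ dist x y := dist_nonneg
    rw [dist_pi_le_iff (by positivity)]
    intro i
    rw [Real.dist_eq]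
    have hybd : ∀ j : Fin d, |y j| ≤ R' := by
      intro j
      have := dist_le_pi_dist y 0 j
      rw [Metric.mem_closedBall] at hy
      simpa [Real.dist_eq] using this.trans hy
    have hq : ∀ j k : Fin d, |q t x j k - q t y j k| ≤ c * dist x y := by
      intro j k
      have h := (hLip t j k).dist_le_mul x y
      rwa [Real.dist_eq] at h
    have hterm : ∀ j : Fin d,
        |x j * q t x j i - y j * q t y j i| ≤ (d * Q + R' * c) * dist x y := by
      intro j
      have hdecomp : x j * q t x j i - y j * q t y j i
          = (x j - y j) * q t x j i + y j * (q t x j i - q t y j i) := by ring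
      rw [hdecomp]
      calc |(x j - y j) * q t x j i + y j * (q t x j i - q t y j i)|
          ≤ |(x j - y j) * q t x j i| + |y j * (q t x j i - q t y j i)| := abs_add_le _ _
        _ = |x j - y j| * |q t x j i| + |y j| * |q t x j i - q t y j i| := by
            rw [abs_mul, abs_mul]
        _ ≤ dist x y * (d * Q) + R' * (c * dist x y) := by
            apply add_le_add
            · apply mul_le_mul _ (qb _ _ _ _) (abs_nonneg _) hdxy
              rw [← Real.dist_eq]; exact dist_le_pi_dist x y j
            · exact mul_le_mul (hybd j) (hq j i) (abs_nonneg _) hR'0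
        _ = (d * Q + R' * c) * dist x y := by ring
    calc |igW d q t x i - igW d q t y i|
        = |∑ j, (x j * q t x j i - y j * q t y j i)| := by
          rw [igW, igW, ← Finset.sum_sub_distrib]
      _ ≤ ∑ j, |x j * q t x j i - y j * q t y j i| := Finset.abs_sum_le_sum_abs _ _
      _ ≤ ∑ _j : Fin d, (d * Q + R' * c) * dist x y := Finset.sum_le_sum fun j _ => hterm j
      _ = d * (d * Q + R' * c) * dist x y := by
          rw [Finset.sum_const, Finset.card_univ, Fintype.card_fin, nsmul_eq_mul]; ring
  have hmemIci : ∀ t ∈ Set.Ico (0:ℝ) T, Set.Icc (0:ℝ) T ∈ nhdsWithin t (Set.Ici t) :=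
    fun t ht => Icc_mem_nhdsGE_of_mem ht
  have hYd' : ∀ t ∈ Set.Ico (0:ℝ) T, HasDerivWithinAt Y (igW d q t (Y t)) (Set.Ici t) t := by
    intro t ht
    exact (hYd t (Set.Ico_subset_Icc_self ht)).mono_of_mem_nhdsWithin (hmemIci t ht)
  have hXd' : ∀ t ∈ Set.Ico (0:ℝ) T, HasDerivWithinAt X (igW d q t (X t)) (Set.Ici t) t := by
    intro t ht
    exact (hXde t (Set.Ico_subset_Icc_self ht)).mono_of_mem_nhdsWithin (hmemIci t ht)
  have hYs : ∀ t ∈ Set.Ico (0:ℝ) T, Y t ∈ Metric.closedBall (0 : Fin d → ℝ) R' := by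
    intro t ht
    rw [mem_closedBall_zero_iff]
    exact (hM t (Set.Ico_subset_Icc_self ht)).trans (le_max_left _ _)
  have hXs : ∀ t ∈ Set.Ico (0:ℝ) T, X t ∈ Metric.closedBall (0 : Fin d → ℝ) R' := by
    intro t ht
    rw [mem_closedBall_zero_iff]
    have : ‖X t‖ ≤ 1 := by
      rw [pi_norm_le_iff_of_nonneg zero_le_one]
      intro i
      rw [Real.norm_eq_abs]
      exact abs_le.mpr ⟨by linarith [hnn i t (Set.Ico_subset_Icc_self ht)],
        hle1 i t (Set.Ico_subset_Icc_self ht)⟩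
    exact this.trans hR'1
  have hEq : Set.EqOn Y X (Set.Icc 0 T) :=
    ODE_solution_unique_of_mem_Icc_right (fun t _ => hwlip t) hYcont hYd' hYs hXcont hXd' hXs
      (by rw [hY0, hX0])
  intro t ht
  exact hEq ht
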